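/- Let s ≥ 2 and let P_m be a dyadic digital (t_m, m, s)-net in base 2 with t_m ≤ (1/10)·log₂ m. Put Ṡ_m = ∑_{k=1}^m 𝔇_k and ρ̇_m² = E^{(m)}_{Y,T}(Ṡ_m²). Then there exists m_0 (depending only on s) such that for all m ≥ m_0, ρ̇_m² ≥ 2^{-2s-4} s^{-s+1} m^{s-1}. -/
import Mathlib


open MeasureTheory Filter

noncomputable section

attribute [local instance] Classical.propDecidable

/-- The `a`-th binary digit (`a ≥ 1`) of the dyadic expansion of `x ∈ [0,1)`
(the finite expansion is used for dyadic rationals). -/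
def bdigit (a : ℕ) (x : ℝ) : ℕ := (⌊x * 2 ^ a⌋).toNat % 2

/-- Digitwise addition modulo 2 of dyadic expansions: `x ⊕ y`. -/
def xorReal (x y : ℝ) : ℝ :=
  ∑' a : ℕ, (((bdigit (a + 1) x + bdigit (a + 1) y) % 2 : ℕ) : ℝ) / 2 ^ (a + 1)

/-- Coordinatewise digitwise addition `⊕` on vectors. -/
def xorVec {s : ℕ} (X Y : Fin s → ℝ) : Fin s → ℝ := fun i => xorReal (X i) (Y i)

/-- Local discrepancy `D(P, Y)` of a finite point set `P` in `[0,1)^s`. -/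
def Dloc {N s : ℕ} (P : Fin N → Fin s → ℝ) (Y : Fin s → ℝ) : ℝ :=
  (∑ n : Fin N, if ∀ i, 0 ≤ P n i ∧ P n i < Y i then (1 : ℝ) else 0) -
    (N : ℝ) * ∏ i, Y i

/-- `P` is a `(t,m,s)`-net in base 2: every elementary dyadic box of volume
`2^(t-m)` contains exactly `2^t` of the points. -/
def IsNet (t m s : ℕ) (P : Fin (2 ^ m) → Fin s → ℝ) : Prop :=
  ∀ d a : Fin s → ℕ, (∀ i, a i < 2 ^ d i) → (∑ i, d i) + t = m →
    (Finset.univ.filter fun n => ∀ i,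
        (a i : ℝ) / 2 ^ d i ≤ P n i ∧ P n i < ((a i : ℝ) + 1) / 2 ^ d i).card = 2 ^ t

/-- The digits `x_{n,i,j}` of the `n`-th point of the dyadic digital net with
generating matrices `C`. -/
def netDig (m s : ℕ) (C : Fin s → Matrix (Fin m) (Fin m) (ZMod 2)) (n : ℕ) :
    Fin s → Fin m → ZMod 2 :=
  fun i j => ∑ r : Fin m, C i j r * (if n.testBit r then 1 else 0)

/-- The `n`-th point of the dyadic digital net with generating matrices `C`. -/
def netPoint (m s : ℕ) (C : Fin s → Matrix (Fin m) (Fin m) (ZMod 2)) (n : ℕ) :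
    Fin s → ℝ :=
  fun i => ∑ j : Fin m, ((netDig m s C n i j).val : ℝ) / 2 ^ ((j : ℕ) + 1)

/-- The unit cube `[0,1]^s`. -/
def cube (s : ℕ) : Set (Fin s → ℝ) := Set.univ.pi fun _ => Set.Icc (0 : ℝ) 1

/-- The point of `Q^s(2^m)` with coordinates `T i / 2^m`. -/
def Qpt {s : ℕ} (m : ℕ) (T : Fin s → Fin (2 ^ m)) : Fin s → ℝ :=
  fun i => ((T i : ℕ) : ℝ) / 2 ^ m

/-- `M_{s,p}(P) = (2^{-sm} ∑_{T ∈ Q^s(2^m)} ∫_{[0,1]^s} |D(P ⊕ T, Y)|^p dY)^{1/p}`. -/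
def Msp (s m : ℕ) (p : ℝ) {N : ℕ} (P : Fin N → Fin s → ℝ) : ℝ :=
  ((2 : ℝ) ^ (-(s * m : ℤ)) * ∑ T : Fin s → Fin (2 ^ m),
      ∫ Y in cube s, |Dloc (fun n => xorVec (P n) (Qpt m T)) Y| ^ p) ^ (1 / p)

/-- The standard normal distribution function `Φ`. -/
def PhiCDF (w : ℝ) : ℝ :=
  (Real.sqrt (2 * Real.pi))⁻¹ * ∫ u in Set.Iio w, Real.exp (-u ^ 2 / 2)

/-- `χ_p`, the `p`-th absolute moment of the standard Gaussian. -/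
def chiMoment (p : ℝ) : ℝ :=
  (Real.sqrt (2 * Real.pi))⁻¹ * ∫ u : ℝ, |u| ^ p * Real.exp (-u ^ 2 / 2)

/-- Digits `y_{n,i,j}` of the points of the dyadic digital sequence generated by
the `ℕ × ℕ` matrices `C` over `F_2`. -/
def seqDig (s : ℕ) (C : Fin s → ℕ → ℕ → ZMod 2) (n : ℕ) : Fin s → ℕ → ZMod 2 :=
  fun i j => ∑ r ∈ Finset.range (n + 1), C i j r * (if n.testBit r then 1 else 0)

/-- The `n`-th point of the dyadic digital sequence generated by `C`. -/
def seqPoint (s : ℕ) (C : Fin s → ℕ → ℕ → ZMod 2) (n : ℕ) : Fin s → ℝ :=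
  fun i => ∑' j : ℕ, ((seqDig s C n i j).val : ℝ) / 2 ^ (j + 1)

/-- The digital sequence generated by `C` is a dyadic digital `(T,s)`-sequence:
for all `m ≥ 1` and `k ≥ 0` the block `X_{k2^m}, …, X_{k2^m+2^m-1}` is a
`(T(m),m,s)`-net in base 2. -/
def IsTSeq (s : ℕ) (Tf : ℕ → ℕ) (C : Fin s → ℕ → ℕ → ZMod 2) : Prop :=
  (∀ m, Tf m ≤ m) ∧
  ∀ m, 1 ≤ m → ∀ k : ℕ,
    IsNet (Tf m) m s fun n : Fin (2 ^ m) => seqPoint s C (k * 2 ^ m + (n : ℕ))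

/-- The dual net `P_m^⊥` of the digital net generated by `C`. -/
def dualNet (m s : ℕ) (C : Fin s → Matrix (Fin m) (Fin m) (ZMod 2)) :
    Finset (Fin s → Fin m → ZMod 2) :=
  Finset.univ.filter fun mm => ∀ n : Fin (2 ^ m),
    (∑ i, ∑ j, mm i j * netDig m s C (n : ℕ) i j) = 0

/-- `ρ(b)`: the position of the last nonzero digit (`ρ(0) = 0`). -/
def rhoF {m : ℕ} (b : Fin m → ZMod 2) : ℕ :=
  (Finset.univ.filter fun j => b j ≠ 0).sup fun j => (j : ℕ) + 1

/-- The 1-indexed component `𝔪_{i,a}` (as `0` or `1`), with the convention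
`𝔪_{i,0} = 0`. -/
def mAt {m : ℕ} (b : Fin m → ZMod 2) (a : ℕ) : ℕ :=
  if h : 1 ≤ a ∧ a ≤ m then (b ⟨a - 1, by omega⟩).val else 0

/-- The 1-indexed digit of a digit array, with the convention that digit `0`
and digits beyond `m` are `0`. -/
def dAt {m : ℕ} (y : Fin m → Fin 2) (a : ℕ) : ℕ :=
  if h : 1 ≤ a ∧ a ≤ m then (y ⟨a - 1, by omega⟩).val else 0

/-- `κ(A)`: the number of nonzero entries of `A`. -/
def kapF {s : ℕ} (A : Fin s → ℕ) : ℕ := (Finset.univ.filter fun i => A i ≠ 0).card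

/-- `a₀(A) = a₁ + ⋯ + a_s`. -/
def a0F {s : ℕ} (A : Fin s → ℕ) : ℕ := ∑ i, A i

/-- `Λ_A(T ⊕ Y^{(m)})` as a function of the digit arrays `t`, `y` of `T`, `Y`:
`∑_{𝔪 ∈ P^{⊥,*}, ρ(𝔪_i) ≤ a_i} e(∑_i (∑_j 𝔪_{i,j}(t_{i,j}+y_{i,j}) + 𝔪_{i,a_i}))`,
where `e(n) = exp(πin) = (-1)^n`. -/
def LamF (m s : ℕ) (C : Fin s → Matrix (Fin m) (Fin m) (ZMod 2)) (A : Fin s → ℕ)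
    (t y : Fin s → Fin m → Fin 2) : ℝ :=
  ∑ mm ∈ (dualNet m s C).filter fun mm => mm ≠ 0 ∧ ∀ i, rhoF (mm i) ≤ A i,
    (-1 : ℝ) ^
      (∑ i, ((∑ j, (mm i j).val * ((t i j : ℕ) + (y i j : ℕ))) + mAt (mm i) (A i)))

/-- The Rademacher function `r_A(Y)` as a function of the digit array of `Y`. -/
def rademF {m s : ℕ} (A : Fin s → ℕ) (y : Fin s → Fin m → Fin 2) : ℝ :=
  ∏ i, (-1 : ℝ) ^ dAt (y i) (A i)

/-- `Ψ_A = (-1)^{κ(A)} 2^{m-s-a₀(A)} r_A(Y) Λ_A(T ⊕ Y^{(m)})` at digit level. -/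
def PsiF (m s : ℕ) (C : Fin s → Matrix (Fin m) (Fin m) (ZMod 2)) (A : Fin s → ℕ)
    (t y : Fin s → Fin m → Fin 2) : ℝ :=
  (-1 : ℝ) ^ kapF A * (2 : ℝ) ^ ((m : ℤ) - (s : ℤ) - (a0F A : ℤ)) *
    rademF A y * LamF m s C A t y

/-- `V₀ = 10 log₂ m`. -/
def V0 (m : ℕ) : ℝ := 10 * Real.logb 2 m

/-- `I_{m,s,k} = {A ∈ I_m^s : max_i a_i = k, a₀(A) ∈ (m - t_m, m + V₀)}`. -/
def IndexSet (m s tm k : ℕ) : Finset (Fin s → ℕ) :=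
  (Fintype.piFinset fun _ : Fin s => Finset.range (m + 1)).filter fun A =>
    Finset.univ.sup A = k ∧ ((m : ℝ) - tm < a0F A ∧ (a0F A : ℝ) < m + V0 m)

/-- `I_{m,s,m+1} = {A ∈ I_m^s : a₀(A) ≥ m + V₀}`. -/
def IndexTail (m s : ℕ) : Finset (Fin s → ℕ) :=
  (Fintype.piFinset fun _ : Fin s => Finset.range (m + 1)).filter fun A =>
    (m : ℝ) + V0 m ≤ (a0F A : ℝ)

/-- `𝔇_k(T,Y) = ∑_{A ∈ I_{m,s,k}} Ψ_A` at digit level. -/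
def DDk (m s tm : ℕ) (C : Fin s → Matrix (Fin m) (Fin m) (ZMod 2)) (k : ℕ)
    (t y : Fin s → Fin m → Fin 2) : ℝ :=
  ∑ A ∈ IndexSet m s tm k, PsiF m s C A t y

/-- `R(T,Y) = ∑_{A ∈ I_{m,s,m+1}} Ψ_A` at digit level. -/
def Rtail (m s : ℕ) (C : Fin s → Matrix (Fin m) (Fin m) (ZMod 2))
    (t y : Fin s → Fin m → Fin 2) : ℝ :=
  ∑ A ∈ IndexTail m s, PsiF m s C A t y

/-- `E^{(m)}_{Y,T}(f)`: the average of `f` over all digit arrays. -/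
def Em (m s : ℕ) (f : (Fin s → Fin m → Fin 2) → (Fin s → Fin m → Fin 2) → ℝ) : ℝ :=
  (2 : ℝ) ^ (-(2 * s * m : ℤ)) *
    ∑ t : Fin s → Fin m → Fin 2, ∑ y : Fin s → Fin m → Fin 2, f t y

/-- Keep the first `k` digits of `t`, replace the remaining ones by those of `t'`. -/
def mergeDig {m s : ℕ} (k : ℕ) (t t' : Fin s → Fin m → Fin 2) :
    Fin s → Fin m → Fin 2 :=
  fun i j => if (j : ℕ) < k then t i j else t' i j

/-- The conditional expectation `E^{(m)}_{Y,T}(f | F_k)` with respect to the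
σ-field `F_k` generated by the dyadic cubes of side `2^{-k}`: the average of `f`
over the digits of index `> k`, as a function of the digit arrays `t`, `y`. -/
def EmCond (m s k : ℕ)
    (f : (Fin s → Fin m → Fin 2) → (Fin s → Fin m → Fin 2) → ℝ)
    (t y : Fin s → Fin m → Fin 2) : ℝ :=
  (2 : ℝ) ^ (-(2 * s * m : ℤ)) *
    ∑ t' : Fin s → Fin m → Fin 2, ∑ y' : Fin s → Fin m → Fin 2,
      f (mergeDig k t t') (mergeDig k y y')

/-- `Θ_{A₁,A₂,k} = E^{(m)}_{Y,T}(Ψ_{A₁}Ψ_{A₂} | F_{k-1}) - E^{(m)}_{Y,T}(Ψ_{A₁}Ψ_{A₂})`. -/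
def ThetaF (m s : ℕ) (C : Fin s → Matrix (Fin m) (Fin m) (ZMod 2))
    (A1 A2 : Fin s → ℕ) (k : ℕ) (t y : Fin s → Fin m → Fin 2) : ℝ :=
  EmCond m s (k - 1) (fun t' y' => PsiF m s C A1 t' y' * PsiF m s C A2 t' y') t y -
    Em m s fun t' y' => PsiF m s C A1 t' y' * PsiF m s C A2 t' y'

/-- `Υ_{d₁,d₂,d₃,J,k}` for a partition `J = (J₁,J₂,J₃)` of `{1,…,s}` and
`k = (k₁,k₂)`. -/
def Ups (m s tm : ℕ) (C : Fin s → Matrix (Fin m) (Fin m) (ZMod 2))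
    (J1 J2 J3 : Finset (Fin s)) (k1 k2 : ℕ) : ℝ :=
  ∑ A1 ∈ IndexSet m s tm k1, ∑ A2 ∈ IndexSet m s tm k1,
    ∑ A3 ∈ IndexSet m s tm k2, ∑ A4 ∈ IndexSet m s tm k2,
      (Em m s fun t y => ThetaF m s C A1 A2 k1 t y * ThetaF m s C A3 A4 k2 t y) *
        (if (Finset.univ.filter fun i => A1 i = A2 i) = J1 ∧
            (Finset.univ.filter fun i => A1 i < A2 i) = J2 ∧
            (Finset.univ.filter fun i => A2 i < A1 i) = J3 ∧
            (Finset.univ.filter fun i => A3 i = A4 i) = J1 ∧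
            (Finset.univ.filter fun i => A3 i < A4 i) = J2 ∧
            (Finset.univ.filter fun i => A4 i < A3 i) = J3 then (1 : ℝ) else 0)

/-- The array of the first `m` dyadic digits of the coordinates of `Y`. -/
def digitsOf (m s : ℕ) (Y : Fin s → ℝ) : Fin s → Fin m → Fin 2 :=
  fun i j => ⟨bdigit ((j : ℕ) + 1) (Y i), by unfold bdigit; omega⟩

/-- Truncation `y^{(m)}` to the first `m` dyadic digits. -/
def truncR (m : ℕ) (y : ℝ) : ℝ :=
  ∑ j ∈ Finset.range m, (bdigit (j + 1) y : ℝ) / 2 ^ (j + 1)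

/-- The elementary interval `Π_a` (`Π_0 = [0,1)`, `Π_a = [2^{-a}, 2^{1-a})`). -/
def PiBox (a : ℕ) : Set ℝ :=
  if a = 0 then Set.Ico 0 1 else Set.Ico ((2 : ℝ) ^ (-(a : ℤ))) ((2 : ℝ) ^ (1 - (a : ℤ)))

/-- `λ_A(Y) = 1_{Π_A}(Y) - vol(Π_A)`. -/
def lamA {s : ℕ} (A : Fin s → ℕ) (Y : Fin s → ℝ) : ℝ :=
  (if ∀ i, Y i ∈ PiBox (A i) then (1 : ℝ) else 0) - (2 : ℝ) ^ (-(a0F A : ℤ))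

/-- The micro-local discrepancy `λ_A(P_m^{(m)} ⊕ T ⊕ Y^{(m)})`. -/
def lamNet (m s : ℕ) (C : Fin s → Matrix (Fin m) (Fin m) (ZMod 2))
    (T Y : Fin s → ℝ) (A : Fin s → ℕ) : ℝ :=
  ∑ n : Fin (2 ^ m),
    lamA A fun i =>
      xorReal (xorReal (truncR m (netPoint m s C (n : ℕ) i)) (T i)) (truncR m (Y i))

/-- The Rademacher function `r_A(Y)` for a real point `Y`. -/
def rademReal {s : ℕ} (A : Fin s → ℕ) (Y : Fin s → ℝ) : ℝ :=
  ∏ i, if A i = 0 then (1 : ℝ) else 1 - 2 * (bdigit (A i) (Y i) : ℝ)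

/-- The truncated discrepancy
`D^{(m)}(P_m ⊕ T, Y) = 2^{-s} ∑_{A ∈ I_m^s} (-1)^{κ(A)} λ_A(P_m^{(m)} ⊕ T ⊕ Y^{(m)}) r_A(Y)`. -/
def Dm (m s : ℕ) (C : Fin s → Matrix (Fin m) (Fin m) (ZMod 2)) (T Y : Fin s → ℝ) : ℝ :=
  (2 : ℝ) ^ (-(s : ℤ)) *
    ∑ A ∈ Fintype.piFinset fun _ : Fin s => Finset.range (m + 1),
      (-1 : ℝ) ^ kapF A * lamNet m s C T Y A * rademReal A Y

/-- `𝔼_{Y,T,m}(f) = 2^{-sm} ∑_{T ∈ Q^s(2^m)} ∫_{[0,1]^s} f(T,Y) dY`. -/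
def EE (m s : ℕ) (f : (Fin s → ℝ) → (Fin s → ℝ) → ℝ) : ℝ :=
  (2 : ℝ) ^ (-(s * m : ℤ)) * ∑ T : Fin s → Fin (2 ^ m), ∫ Y in cube s, f (Qpt m T) Y
/-! ### Auxiliary machinery for Statement 17 -/

open Finset in
lemma st_chi_val (c : ℕ) : ((-1:ℝ))^c = if c % 2 = 0 then 1 else -1 := by
  rcases Nat.even_or_odd c with h | h
  · rw [h.neg_one_pow, if_pos (Nat.even_iff.mp h)]
  · rw [h.neg_one_pow, if_neg (by rw [Nat.odd_iff.mp h]; norm_num)]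

open Finset in
lemma st_sumFin2 (c : ℕ) :
    (∑ b : Fin 2, ((-1:ℝ))^(c * (b:ℕ))) = if c % 2 = 0 then 2 else 0 := by
  rw [Fin.sum_univ_two]
  simp only [Fin.val_zero, Fin.val_one, Nat.mul_zero, Nat.mul_one, pow_zero]
  rw [st_chi_val c]
  split <;> norm_num

open Finset in
lemma st_sum_pi1 {ι : Type*} [Fintype ι] [DecidableEq ι] {κ : ι → Type*} [∀ i, Fintype (κ i)]
    [∀ i, DecidableEq (κ i)]
    (F : (i : ι) → κ i → ℝ) :
    (∑ t : (i : ι) → κ i, ∏ i, F i (t i)) = ∏ i, ∑ x : κ i, F i x := by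
  rw [Finset.prod_univ_sum (fun i => (univ : Finset (κ i))) F, Fintype.piFinset_univ]

open Finset in
lemma st_sum_pi2 {m s : ℕ} (f : Fin s → Fin m → Fin 2 → ℝ) :
    (∑ t : Fin s → Fin m → Fin 2, ∏ i, ∏ j, f i j (t i j))
      = ∏ i, ∏ j, ∑ b : Fin 2, f i j b := by
  rw [st_sum_pi1 (κ := fun _ : Fin s => Fin m → Fin 2) (fun i v => ∏ j, f i j (v j))]
  exact Finset.prod_congr rfl fun i _ => st_sum_pi1 _

open Finset in
lemma st_factor {α β : Type*} [Fintype α] [Fintype β] (c : ℝ) (P : α → ℝ) (Q : β → ℝ) :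
    (∑ t : α, ∑ y : β, c * (P t * Q y)) = c * ((∑ t : α, P t) * (∑ y : β, Q y)) := by
  rw [Finset.sum_mul_sum]
  simp only [Finset.mul_sum]

/-- coefficient of `t`-digits -/
def ctN {m s : ℕ} (mm mm' : Fin s → Fin m → ZMod 2) (i : Fin s) (j : Fin m) : ℕ :=
  (mm i j).val + (mm' i j).val

/-- indicator digit of `A` -/
def eNd {m s : ℕ} (A : Fin s → ℕ) (i : Fin s) (j : Fin m) : ℕ :=
  if (j:ℕ)+1 = A i then 1 else 0

/-- coefficient of `y`-digits -/
def cyN {m s : ℕ} (A B : Fin s → ℕ) (mm mm' : Fin s → Fin m → ZMod 2)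
    (i : Fin s) (j : Fin m) : ℕ :=
  ctN mm mm' i j + eNd A i j + eNd B i j

open Finset in
lemma st_dAt_eq {m s : ℕ} (A : Fin s → ℕ) (i : Fin s) (y : Fin m → Fin 2) (h : A i ≤ m) :
    dAt y (A i) = ∑ j : Fin m, eNd A i j * ((y j : ℕ)) := by
  unfold dAt eNd
  rcases Nat.eq_zero_or_pos (A i) with h0 | h0
  · rw [dif_neg (by omega)]
    rw [eq_comm]
    apply Finset.sum_eq_zero
    intro j _
    rw [if_neg (by omega), zero_mul]
  · rw [dif_pos ⟨h0, h⟩]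
    rw [Finset.sum_eq_single (⟨A i - 1, by omega⟩ : Fin m)]
    · rw [if_pos (by simp; omega), one_mul]
    · intro j _ hj
      rw [if_neg, zero_mul]
      intro hc
      exact hj (Fin.ext (by simp; omega))
    · intro h'; exact absurd (Finset.mem_univ _) h'

open Finset in
lemma st_rhoF_le_iff {m : ℕ} {b : Fin m → ZMod 2} {a : ℕ} :
    rhoF b ≤ a ↔ ∀ j : Fin m, b j ≠ 0 → (j:ℕ)+1 ≤ a := by
  unfold rhoF
  rw [Finset.sup_le_iff]
  constructor
  · intro h j hj; exact h j (Finset.mem_filter.mpr ⟨Finset.mem_univ _, hj⟩)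
  · intro h j hj; exact h j (Finset.mem_filter.mp hj).2

lemma st_zmod2_ne : ∀ x y : ZMod 2, x ≠ y → (x.val + y.val) % 2 = 1 := by decide

open Finset in
lemma st_pointwise {m s : ℕ} (A B : Fin s → ℕ) (hA : ∀ i, A i ≤ m) (hB : ∀ i, B i ≤ m)
    (mm mm' : Fin s → Fin m → ZMod 2) (t y : Fin s → Fin m → Fin 2) :
    rademF A y * rademF B y *
      ((-1:ℝ) ^ (∑ i, ((∑ j, (mm i j).val * ((t i j : ℕ) + (y i j : ℕ))) + mAt (mm i) (A i))) *
       (-1:ℝ) ^ (∑ i, ((∑ j, (mm' i j).val * ((t i j : ℕ) + (y i j : ℕ))) + mAt (mm' i) (B i))))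
      = (-1:ℝ) ^ (∑ i, (mAt (mm i) (A i) + mAt (mm' i) (B i))) *
        ((∏ i, ∏ j, (-1:ℝ) ^ (ctN mm mm' i j * (t i j : ℕ))) *
         (∏ i, ∏ j, (-1:ℝ) ^ (cyN A B mm mm' i j * (y i j : ℕ)))) := by
  unfold rademF
  simp only [prod_pow_eq_pow_sum, ← pow_add]
  congr 1
  rw [Finset.sum_congr rfl fun i _ => st_dAt_eq A i (y i) (hA i),
      Finset.sum_congr rfl fun i _ => st_dAt_eq B i (y i) (hB i)]
  simp only [← Finset.sum_add_distrib]
  refine Finset.sum_congr rfl fun i _ => ?_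
  have key : (∑ x : Fin m, (eNd A i x * ((y i x : ℕ)) + eNd B i x * ((y i x : ℕ))))
      + ((∑ x : Fin m, (mm i x).val * (((t i x):ℕ)+((y i x):ℕ)))
        + (∑ x : Fin m, (mm' i x).val * (((t i x):ℕ)+((y i x):ℕ))))
      = ∑ x : Fin m, (ctN mm mm' i x * (((t i x):ℕ)) + cyN A B mm mm' i x * (((y i x):ℕ))) := by
    simp only [← Finset.sum_add_distrib]
    refine Finset.sum_congr rfl fun j _ => ?_
    unfold cyN ctN
    ring
  omega

open Finset in
lemma st_inner {m s : ℕ} (A B : Fin s → ℕ) (hA : ∀ i, A i ≤ m) (hB : ∀ i, B i ≤ m)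
    (mm mm' : Fin s → Fin m → ZMod 2) :
    (∑ t : Fin s → Fin m → Fin 2, ∑ y : Fin s → Fin m → Fin 2,
      rademF A y * rademF B y *
        ((-1:ℝ) ^ (∑ i, ((∑ j, (mm i j).val * ((t i j : ℕ) + (y i j : ℕ))) + mAt (mm i) (A i))) *
         (-1:ℝ) ^ (∑ i, ((∑ j, (mm' i j).val * ((t i j : ℕ) + (y i j : ℕ))) + mAt (mm' i) (B i)))))
      = if mm' = mm ∧ B = A then ((2:ℝ) ^ (s * m)) ^ 2 else 0 := by
  simp only [st_pointwise A B hA hB mm mm']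
  rw [st_factor]
  rw [st_sum_pi2 (fun i j b => (-1:ℝ) ^ (ctN mm mm' i j * (b:ℕ)))]
  rw [st_sum_pi2 (fun i j b => (-1:ℝ) ^ (cyN A B mm mm' i j * (b:ℕ)))]
  simp only [st_sumFin2]
  by_cases h1 : mm' = mm
  · by_cases h2 : B = A
    · rw [if_pos ⟨h1, h2⟩]
      subst h1; subst h2
      have hct : ∀ (i : Fin s) (j : Fin m), ctN mm' mm' i j % 2 = 0 := by
        intro i j; unfold ctN; omega
      have hcy : ∀ (i : Fin s) (j : Fin m), cyN B B mm' mm' i j % 2 = 0 := by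
        intro i j; unfold cyN ctN eNd; split <;> omega
      have hP : (∏ i : Fin s, ∏ j : Fin m, (if ctN mm' mm' i j % 2 = 0 then (2:ℝ) else 0))
          = (2:ℝ) ^ (s * m) := by
        calc (∏ i : Fin s, ∏ j : Fin m, (if ctN mm' mm' i j % 2 = 0 then (2:ℝ) else 0))
            = ∏ _i : Fin s, ∏ _j : Fin m, (2:ℝ) :=
              Finset.prod_congr rfl fun i _ => Finset.prod_congr rfl fun j _ => if_pos (hct i j)
          _ = (2:ℝ) ^ (s * m) := by
              simp only [Finset.prod_const, Finset.card_univ, Fintype.card_fin, ← pow_mul]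
              rw [Nat.mul_comm]
      have hQ : (∏ i : Fin s, ∏ j : Fin m, (if cyN B B mm' mm' i j % 2 = 0 then (2:ℝ) else 0))
          = (2:ℝ) ^ (s * m) := by
        calc (∏ i : Fin s, ∏ j : Fin m, (if cyN B B mm' mm' i j % 2 = 0 then (2:ℝ) else 0))
            = ∏ _i : Fin s, ∏ _j : Fin m, (2:ℝ) :=
              Finset.prod_congr rfl fun i _ => Finset.prod_congr rfl fun j _ => if_pos (hcy i j)
          _ = (2:ℝ) ^ (s * m) := by
              simp only [Finset.prod_const, Finset.card_univ, Fintype.card_fin, ← pow_mul]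
              rw [Nat.mul_comm]
      rw [hP, hQ]
      have hsgn : ((-1:ℝ)) ^ (∑ i, (mAt (mm' i) (B i) + mAt (mm' i) (B i))) = 1 := by
        rw [show (∑ i, (mAt (mm' i) (B i) + mAt (mm' i) (B i)))
            = 2 * ∑ i, mAt (mm' i) (B i) by rw [Finset.sum_add_distrib]; ring]
        rw [pow_mul]
        norm_num
      rw [hsgn]
      ring
    · rw [if_neg (by tauto)]
      subst h1
      obtain ⟨i, hi⟩ : ∃ i, A i ≠ B i := by
        by_contra h; push_neg at h; exact h2 (funext fun i => (h i).symm)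
      obtain ⟨j, hj⟩ : ∃ j : Fin m, cyN A B mm' mm' i j % 2 = 1 := by
        rcases Nat.eq_zero_or_pos (A i) with h0 | h0
        · have hBi : 1 ≤ B i := by omega
          refine ⟨⟨B i - 1, by have := hB i; omega⟩, ?_⟩
          unfold cyN ctN eNd
          dsimp only
          split <;> split <;> omega
        · refine ⟨⟨A i - 1, by have := hA i; omega⟩, ?_⟩
          unfold cyN ctN eNd
          dsimp only
          split <;> split <;> omega
      have hz : (∏ i' : Fin s, ∏ j' : Fin m, (if cyN A B mm' mm' i' j' % 2 = 0 then (2:ℝ) else 0)) = 0 :=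
        Finset.prod_eq_zero (Finset.mem_univ i)
          (Finset.prod_eq_zero (Finset.mem_univ j) (by rw [hj]; norm_num))
      rw [hz]
      ring
  · rw [if_neg (by tauto)]
    obtain ⟨i, j, hij⟩ : ∃ i j, mm i j ≠ mm' i j := by
      by_contra h; push_neg at h
      exact h1 (funext fun i => funext fun j => (h i j).symm)
    have hct : ctN mm mm' i j % 2 = 1 := st_zmod2_ne (mm i j) (mm' i j) hij
    have hz : (∏ i' : Fin s, ∏ j' : Fin m, (if ctN mm mm' i' j' % 2 = 0 then (2:ℝ) else 0)) = 0 :=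
      Finset.prod_eq_zero (Finset.mem_univ i)
        (Finset.prod_eq_zero (Finset.mem_univ j) (by rw [hct]; norm_num))
    rw [hz]
    ring

open Finset in
lemma st_dual_expand {m s : ℕ} (C : Fin s → Matrix (Fin m) (Fin m) (ZMod 2))
    (mm : Fin s → Fin m → ZMod 2) (n : ℕ) :
    (∑ i, ∑ j, mm i j * netDig m s C n i j)
      = ∑ r : Fin m, (∑ i, ∑ j, mm i j * C i j r) * (if n.testBit (r:ℕ) then 1 else 0) := by
  calc (∑ i, ∑ j, mm i j * netDig m s C n i j)
      = ∑ i, ∑ j, ∑ r : Fin m, mm i j * (C i j r * (if n.testBit (r:ℕ) then 1 else 0)) := by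
        unfold netDig
        exact Finset.sum_congr rfl fun i _ => Finset.sum_congr rfl fun j _ => by
          rw [Finset.mul_sum]
    _ = ∑ i, ∑ r : Fin m, ∑ j, mm i j * (C i j r * (if n.testBit (r:ℕ) then 1 else 0)) :=
        Finset.sum_congr rfl fun i _ => Finset.sum_comm
    _ = ∑ r : Fin m, ∑ i, ∑ j, mm i j * (C i j r * (if n.testBit (r:ℕ) then 1 else 0)) :=
        Finset.sum_comm
    _ = ∑ r : Fin m, (∑ i, ∑ j, mm i j * C i j r) * (if n.testBit (r:ℕ) then 1 else 0) := by
        refine Finset.sum_congr rfl fun r _ => ?_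
        rw [Finset.sum_mul]
        refine Finset.sum_congr rfl fun i _ => ?_
        rw [Finset.sum_mul]
        exact Finset.sum_congr rfl fun j _ => by ring

open Finset in
lemma st_mem_dualNet {m s : ℕ} (C : Fin s → Matrix (Fin m) (Fin m) (ZMod 2))
    (mm : Fin s → Fin m → ZMod 2) :
    mm ∈ dualNet m s C ↔ ∀ r : Fin m, (∑ i, ∑ j, mm i j * C i j r) = 0 := by
  unfold dualNet
  rw [Finset.mem_filter]
  simp only [Finset.mem_univ, true_and]
  constructor
  · intro h r
    have h2 := h ⟨2^(r:ℕ), Nat.pow_lt_pow_right one_lt_two r.isLt⟩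
    rw [st_dual_expand] at h2
    rw [Finset.sum_eq_single r] at h2
    · simpa [Nat.testBit_two_pow] using h2
    · intro b _ hb
      have hnb : ¬((2^(r:ℕ)).testBit (b:ℕ)) := by
        rw [Nat.testBit_two_pow]
        simp only [decide_eq_true_eq]
        exact fun hh => hb (Fin.ext hh.symm)
      rw [if_neg hnb, mul_zero]
    · intro h'; exact absurd (Finset.mem_univ r) h'
  · intro h n
    rw [st_dual_expand]
    exact Finset.sum_eq_zero fun r _ => by rw [h r, zero_mul]

open Finset in
lemma st_card_W {m : ℕ} (a : ℕ) (ha : a ≤ m) :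
    ((univ : Finset (Fin m → ZMod 2)).filter fun b => rhoF b ≤ a).card = 2 ^ a := by
  have h1 : ((univ : Finset (Fin m → ZMod 2)).filter fun b => rhoF b ≤ a)
      = Fintype.piFinset (fun j : Fin m => if (j:ℕ) < a then (univ : Finset (ZMod 2)) else {0}) := by
    ext b
    simp only [Finset.mem_filter, Finset.mem_univ, true_and, Fintype.mem_piFinset, st_rhoF_le_iff]
    constructor
    · intro h j
      by_cases hj : (j:ℕ) < a
      · rw [if_pos hj]; exact Finset.mem_univ _
      · rw [if_neg hj, Finset.mem_singleton]
        by_contra hb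
        exact hj (by have := h j hb; omega)
    · intro h j hb
      by_contra hc
      have h3 := h j
      rw [if_neg (by omega), Finset.mem_singleton] at h3
      exact hb h3
  rw [h1, Fintype.card_piFinset]
  have h2 : ∀ j : Fin m,
      (if (j:ℕ) < a then (univ : Finset (ZMod 2)) else {0}).card = if (j:ℕ) < a then 2 else 1 := by
    intro j; split
    · rw [Finset.card_univ, ZMod.card]
    · exact Finset.card_singleton _
  rw [Finset.prod_congr rfl fun j _ => h2 j]
  rw [Fin.prod_univ_eq_prod_range (fun j => if j < a then 2 else 1) m]
  rw [Finset.prod_ite (fun _ => 2) (fun _ => 1)]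
  rw [Finset.prod_const, Finset.prod_const_one]
  have h3 : (Finset.range m).filter (fun j => j < a) = Finset.range a := by
    ext j; simp only [Finset.mem_filter, Finset.mem_range]; omega
  rw [h3, Finset.card_range, mul_one]

open Finset in
lemma st_card_V {m s : ℕ} (A : Fin s → ℕ) (hA : ∀ i, A i ≤ m) :
    ((univ : Finset (Fin s → Fin m → ZMod 2)).filter fun mm => ∀ i, rhoF (mm i) ≤ A i).card
      = 2 ^ (a0F A) := by
  have h1 : ((univ : Finset (Fin s → Fin m → ZMod 2)).filter fun mm => ∀ i, rhoF (mm i) ≤ A i)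
      = Fintype.piFinset (fun i => (univ : Finset (Fin m → ZMod 2)).filter fun b => rhoF b ≤ A i) := by
    ext mm
    simp only [Finset.mem_filter, Finset.mem_univ, true_and, Fintype.mem_piFinset]
  rw [h1, Fintype.card_piFinset]
  calc (∏ i, ((univ : Finset (Fin m → ZMod 2)).filter fun b => rhoF b ≤ A i).card)
      = ∏ i, 2 ^ (A i) := Finset.prod_congr rfl fun i _ => st_card_W (A i) (hA i)
    _ = 2 ^ (a0F A) := Finset.prod_pow_eq_pow_sum univ A 2

open Finset in
lemma st_exists_dual {m s : ℕ} (C : Fin s → Matrix (Fin m) (Fin m) (ZMod 2)) (A : Fin s → ℕ)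
    (hA : ∀ i, A i ≤ m) (hsum : m < a0F A) :
    ((dualNet m s C).filter fun mm => mm ≠ 0 ∧ ∀ i, rhoF (mm i) ≤ A i).Nonempty := by
  have hcard : (univ : Finset (Fin m → ZMod 2)).card
      < ((univ : Finset (Fin s → Fin m → ZMod 2)).filter fun mm => ∀ i, rhoF (mm i) ≤ A i).card := by
    rw [st_card_V A hA, Finset.card_univ]
    have : Fintype.card (Fin m → ZMod 2) = 2 ^ m := by
      rw [Fintype.card_fun, ZMod.card, Fintype.card_fin]
    rw [this]
    exact Nat.pow_lt_pow_right one_lt_two hsum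
  obtain ⟨x, hx, y, hy, hxy, hfeq⟩ :=
    Finset.exists_ne_map_eq_of_card_lt_of_maps_to hcard
      (f := fun mm (r : Fin m) => ∑ i, ∑ j, mm i j * C i j r) (fun a _ => Finset.mem_univ _)
  refine ⟨x - y, Finset.mem_filter.mpr ⟨?_, sub_ne_zero.mpr hxy, ?_⟩⟩
  · rw [st_mem_dualNet]
    intro r
    have h := congrFun hfeq r
    simp only [Pi.sub_apply, sub_mul, Finset.sum_sub_distrib]
    exact sub_eq_zero_of_eq h
  · intro i
    rw [st_rhoF_le_iff]
    intro j hne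
    by_contra hc
    push_neg at hc
    have hxz := st_rhoF_le_iff.mp ((Finset.mem_filter.mp hx).2 i) j
    have hyz := st_rhoF_le_iff.mp ((Finset.mem_filter.mp hy).2 i) j
    have hx0 : x i j = 0 := by by_contra h0; exact absurd (hxz h0) (Nat.not_le.mpr hc)
    have hy0 : y i j = 0 := by by_contra h0; exact absurd (hyz h0) (Nat.not_le.mpr hc)
    apply hne
    simp [Pi.sub_apply, hx0, hy0]

open Finset in
lemma st_swap4 {m s : ℕ} {β : Type*} (D E : Finset β)
    (X : (Fin s → Fin m → Fin 2) → (Fin s → Fin m → Fin 2) → β → β → ℝ) :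
    (∑ t : Fin s → Fin m → Fin 2, ∑ y : Fin s → Fin m → Fin 2, ∑ a ∈ D, ∑ b ∈ E, X t y a b)
      = ∑ a ∈ D, ∑ b ∈ E, ∑ t : Fin s → Fin m → Fin 2, ∑ y : Fin s → Fin m → Fin 2, X t y a b := by
  calc (∑ t : Fin s → Fin m → Fin 2, ∑ y : Fin s → Fin m → Fin 2, ∑ a ∈ D, ∑ b ∈ E, X t y a b)
      = ∑ t : Fin s → Fin m → Fin 2, ∑ a ∈ D, ∑ y : Fin s → Fin m → Fin 2, ∑ b ∈ E, X t y a b :=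
        Finset.sum_congr rfl fun t _ => Finset.sum_comm
    _ = ∑ a ∈ D, ∑ t : Fin s → Fin m → Fin 2, ∑ y : Fin s → Fin m → Fin 2, ∑ b ∈ E, X t y a b :=
        Finset.sum_comm
    _ = ∑ a ∈ D, ∑ t : Fin s → Fin m → Fin 2, ∑ b ∈ E, ∑ y : Fin s → Fin m → Fin 2, X t y a b :=
        Finset.sum_congr rfl fun a _ => Finset.sum_congr rfl fun t _ => Finset.sum_comm
    _ = ∑ a ∈ D, ∑ b ∈ E, ∑ t : Fin s → Fin m → Fin 2, ∑ y : Fin s → Fin m → Fin 2, X t y a b :=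
        Finset.sum_congr rfl fun a _ => Finset.sum_comm

open Finset in
lemma st_mm {β γ : Type*} (D : Finset β) (E : Finset γ) (a b : ℝ) (f : β → ℝ) (g : γ → ℝ) :
    (a * ∑ x ∈ D, f x) * (b * ∑ y ∈ E, g y) = ∑ x ∈ D, ∑ y ∈ E, (a * b) * (f x * g y) := by
  rw [Finset.mul_sum, Finset.mul_sum, Finset.sum_mul_sum]
  exact Finset.sum_congr rfl fun x _ => Finset.sum_congr rfl fun y _ => by ring

open Finset in
lemma st_pull {α β : Type*} [Fintype α] [Fintype β] (K : ℝ) (W : α → β → ℝ) :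
    (∑ t : α, ∑ y : β, K * W t y) = K * ∑ t : α, ∑ y : β, W t y := by
  rw [Finset.mul_sum]
  exact Finset.sum_congr rfl fun t _ => by rw [Finset.mul_sum]

open Finset in
lemma st_psi {m s : ℕ} (C : Fin s → Matrix (Fin m) (Fin m) (ZMod 2)) (A B : Fin s → ℕ)
    (hA : ∀ i, A i ≤ m) (hB : ∀ i, B i ≤ m) :
    (∑ t : Fin s → Fin m → Fin 2, ∑ y : Fin s → Fin m → Fin 2,
        PsiF m s C A t y * PsiF m s C B t y)
      = if B = A then
          (((dualNet m s C).filter fun mm => mm ≠ 0 ∧ ∀ i, rhoF (mm i) ≤ A i).card : ℝ)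
            * ((2:ℝ) ^ (s * m))^2 * ((2:ℝ) ^ ((m:ℤ) - (s:ℤ) - (a0F A : ℤ)))^2
        else 0 := by
  have expand : ∀ t y : Fin s → Fin m → Fin 2,
      PsiF m s C A t y * PsiF m s C B t y
        = ((-1:ℝ)^(kapF A) * (2:ℝ)^((m:ℤ) - (s:ℤ) - (a0F A : ℤ))
            * ((-1:ℝ)^(kapF B) * (2:ℝ)^((m:ℤ) - (s:ℤ) - (a0F B : ℤ)))) *
          (∑ mm ∈ (dualNet m s C).filter fun mm => mm ≠ 0 ∧ ∀ i, rhoF (mm i) ≤ A i,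
           ∑ mm' ∈ (dualNet m s C).filter fun mm => mm ≠ 0 ∧ ∀ i, rhoF (mm i) ≤ B i,
            rademF A y * rademF B y *
              ((-1:ℝ) ^ (∑ i, ((∑ j, (mm i j).val * ((t i j : ℕ) + (y i j : ℕ))) + mAt (mm i) (A i))) *
               (-1:ℝ) ^ (∑ i, ((∑ j, (mm' i j).val * ((t i j : ℕ) + (y i j : ℕ))) + mAt (mm' i) (B i))))) := by
    intro t y
    unfold PsiF LamF
    rw [st_mm]
    simp only [Finset.mul_sum]
    exact Finset.sum_congr rfl fun mm _ => Finset.sum_congr rfl fun mm' _ => by ring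
  simp only [expand]
  rw [st_pull]
  rw [st_swap4]
  rw [Finset.sum_congr rfl fun mm hmm => Finset.sum_congr rfl fun mm' hmm' =>
    st_inner A B hA hB mm mm']
  by_cases hBA : B = A
  · subst hBA
    rw [if_pos rfl]
    simp only [and_true]
    rw [Finset.sum_congr rfl fun mm hmm => Finset.sum_ite_eq' _ mm
      (fun _ => ((2:ℝ) ^ (s * m)) ^ 2)]
    rw [Finset.sum_congr rfl fun mm hmm => if_pos hmm]
    rw [Finset.sum_const, nsmul_eq_mul]
    have h1 : (-1:ℝ)^(kapF B) * (-1:ℝ)^(kapF B) = 1 := by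
      rw [← pow_add]
      exact Even.neg_one_pow ⟨kapF B, rfl⟩
    have h2 : ((-1:ℝ)^(kapF B) * (2:ℝ)^((m:ℤ) - (s:ℤ) - (a0F B : ℤ))
        * ((-1:ℝ)^(kapF B) * (2:ℝ)^((m:ℤ) - (s:ℤ) - (a0F B : ℤ))))
        = ((2:ℝ)^((m:ℤ) - (s:ℤ) - (a0F B : ℤ)))^2 := by
      calc ((-1:ℝ)^(kapF B) * (2:ℝ)^((m:ℤ) - (s:ℤ) - (a0F B : ℤ))
          * ((-1:ℝ)^(kapF B) * (2:ℝ)^((m:ℤ) - (s:ℤ) - (a0F B : ℤ))))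
          = ((-1:ℝ)^(kapF B) * (-1:ℝ)^(kapF B))
            * ((2:ℝ)^((m:ℤ) - (s:ℤ) - (a0F B : ℤ)) * (2:ℝ)^((m:ℤ) - (s:ℤ) - (a0F B : ℤ))) := by
            ring
        _ = ((2:ℝ)^((m:ℤ) - (s:ℤ) - (a0F B : ℤ)))^2 := by rw [h1, one_mul, sq]
    rw [h2]
    ring
  · rw [if_neg hBA]
    simp [hBA]

open Finset in
lemma st_memI {m s tm k : ℕ} {A : Fin s → ℕ} (h : A ∈ IndexSet m s tm k) : ∀ i, A i ≤ m := by
  intro i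
  have h1 := (Finset.mem_filter.mp h).1
  have h2 := (Fintype.mem_piFinset.mp h1) i
  rw [Finset.mem_range] at h2
  omega

open Finset in
lemma st_main_eq (m s tm : ℕ) (C : Fin s → Matrix (Fin m) (Fin m) (ZMod 2)) :
    Em m s (fun t y => (∑ k ∈ Finset.Icc 1 m, DDk m s tm C k t y)^2)
      = ∑ A ∈ (Finset.Icc 1 m).biUnion (fun k => IndexSet m s tm k),
          (((dualNet m s C).filter fun mm => mm ≠ 0 ∧ ∀ i, rhoF (mm i) ≤ A i).card : ℝ)
            * ((2:ℝ) ^ ((m:ℤ) - (s:ℤ) - (a0F A : ℤ)))^2 := by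
  have hdisj : (↑(Finset.Icc 1 m) : Set ℕ).PairwiseDisjoint (fun k => IndexSet m s tm k) := by
    intro k1 _ k2 _ hne
    refine Finset.disjoint_left.mpr fun A h1 h2 => hne ?_
    have e1 := ((Finset.mem_filter.mp h1).2).1
    have e2 := ((Finset.mem_filter.mp h2).2).1
    rw [← e1, ← e2]
  have hS : ∀ t y : Fin s → Fin m → Fin 2,
      (∑ k ∈ Finset.Icc 1 m, DDk m s tm C k t y)
        = ∑ A ∈ (Finset.Icc 1 m).biUnion (fun k => IndexSet m s tm k), PsiF m s C A t y := by
    intro t y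
    rw [Finset.sum_biUnion hdisj]
    rfl
  have hmem : ∀ A ∈ (Finset.Icc 1 m).biUnion (fun k => IndexSet m s tm k), ∀ i, A i ≤ m := by
    intro A hA
    obtain ⟨k, _, hk⟩ := Finset.mem_biUnion.mp hA
    exact st_memI hk
  unfold Em
  simp only [hS]
  have hsq : ∀ t y : Fin s → Fin m → Fin 2,
      (∑ A ∈ (Finset.Icc 1 m).biUnion (fun k => IndexSet m s tm k), PsiF m s C A t y)^2
        = ∑ A ∈ (Finset.Icc 1 m).biUnion (fun k => IndexSet m s tm k),
            ∑ B ∈ (Finset.Icc 1 m).biUnion (fun k => IndexSet m s tm k),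
              PsiF m s C A t y * PsiF m s C B t y := by
    intro t y
    rw [pow_two, Finset.sum_mul_sum]
  simp only [hsq]
  rw [st_swap4]
  rw [Finset.sum_congr rfl fun A hA => Finset.sum_congr rfl fun B hB =>
    st_psi C A B (hmem A hA) (hmem B hB)]
  rw [Finset.sum_congr rfl fun A _ =>
    Finset.sum_ite_eq' ((Finset.Icc 1 m).biUnion fun k => IndexSet m s tm k) A
      (fun _ => (((dualNet m s C).filter fun mm => mm ≠ 0 ∧ ∀ i, rhoF (mm i) ≤ A i).card : ℝ)
        * ((2:ℝ) ^ (s * m))^2 * ((2:ℝ) ^ ((m:ℤ) - (s:ℤ) - (a0F A : ℤ)))^2)]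
  rw [Finset.sum_congr rfl fun A hA =>
    (if_pos hA :
      (if A ∈ (Finset.Icc 1 m).biUnion fun k => IndexSet m s tm k then
        (((dualNet m s C).filter fun mm => mm ≠ 0 ∧ ∀ i, rhoF (mm i) ≤ A i).card : ℝ)
          * ((2:ℝ) ^ (s * m))^2 * ((2:ℝ) ^ ((m:ℤ) - (s:ℤ) - (a0F A : ℤ)))^2 else 0)
      = (((dualNet m s C).filter fun mm => mm ≠ 0 ∧ ∀ i, rhoF (mm i) ≤ A i).card : ℝ)
          * ((2:ℝ) ^ (s * m))^2 * ((2:ℝ) ^ ((m:ℤ) - (s:ℤ) - (a0F A : ℤ)))^2)]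
  rw [Finset.mul_sum]
  refine Finset.sum_congr rfl fun A hA => ?_
  have hpow : (2:ℝ) ^ (-(2 * (s:ℤ) * (m:ℤ))) * ((2:ℝ) ^ (s * m))^2 = 1 := by
    rw [← pow_mul, ← zpow_natCast (2:ℝ) (s * m * 2), ← zpow_add₀ (by norm_num : (2:ℝ) ≠ 0)]
    rw [show (-(2 * (s:ℤ) * (m:ℤ)) + ((s * m * 2 : ℕ) : ℤ)) = 0 from by push_cast; ring]
    exact zpow_zero 2
  calc (2:ℝ) ^ (-(2 * (s:ℤ) * (m:ℤ)))
        * ((((dualNet m s C).filter fun mm => mm ≠ 0 ∧ ∀ i, rhoF (mm i) ≤ A i).card : ℝ)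
          * ((2:ℝ) ^ (s * m))^2 * ((2:ℝ) ^ ((m:ℤ) - (s:ℤ) - (a0F A : ℤ)))^2)
      = ((2:ℝ) ^ (-(2 * (s:ℤ) * (m:ℤ))) * ((2:ℝ) ^ (s * m))^2)
        * ((((dualNet m s C).filter fun mm => mm ≠ 0 ∧ ∀ i, rhoF (mm i) ≤ A i).card : ℝ)
          * ((2:ℝ) ^ ((m:ℤ) - (s:ℤ) - (a0F A : ℤ)))^2) := by ring
    _ = (((dualNet m s C).filter fun mm => mm ≠ 0 ∧ ∀ i, rhoF (mm i) ≤ A i).card : ℝ)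
          * ((2:ℝ) ^ ((m:ℤ) - (s:ℤ) - (a0F A : ℤ)))^2 := by rw [hpow, one_mul]

open Finset in
lemma st_F0_sub {m s : ℕ} (tm : ℕ) (hm : 2 ≤ m) :
    ((Fintype.piFinset fun _ : Fin s => Finset.range (m+1)).filter fun A => a0F A = m + 1)
      ⊆ (Finset.Icc 1 m).biUnion (fun k => IndexSet m s tm k) := by
  intro A hA
  rw [Finset.mem_biUnion]
  obtain ⟨hpi, ha0⟩ := Finset.mem_filter.mp hA
  have hAle : ∀ i, A i ≤ m := by
    intro i
    have := (Fintype.mem_piFinset.mp hpi) i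
    rw [Finset.mem_range] at this
    omega
  refine ⟨Finset.univ.sup A, ?_, ?_⟩
  · rw [Finset.mem_Icc]
    constructor
    · by_contra hlt
      push_neg at hlt
      have h0 : ∀ i, A i = 0 := fun i => by
        have := Finset.le_sup (f := A) (Finset.mem_univ i); omega
      have hz : a0F A = 0 := Finset.sum_eq_zero fun i _ => h0 i
      omega
    · exact Finset.sup_le fun i _ => hAle i
  · unfold IndexSet
    rw [Finset.mem_filter]
    refine ⟨hpi, rfl, ?_, ?_⟩
    · rw [ha0]; push_cast
      have h1 : (0:ℝ) ≤ (tm:ℝ) := Nat.cast_nonneg _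
      linarith
    · rw [ha0]
      unfold V0
      push_cast
      have h1 : (1:ℝ) ≤ Real.logb 2 m := by
        rw [show (1:ℝ) = Real.logb 2 2 from (Real.logb_self_eq_one one_lt_two).symm]
        exact (Real.logb_le_logb one_lt_two (by norm_num : (0:ℝ) < 2)
          (by exact_mod_cast Nat.lt_of_lt_of_le two_pos hm : (0:ℝ) < (m:ℝ))).mpr
          (by exact_mod_cast hm)
      linarith

open Finset in
lemma st_F0_card (m s' : ℕ) (hs' : 1 ≤ s') (hm : s' + 1 ≤ m) :
    (m / (s'+1))^(s')
      ≤ ((Fintype.piFinset fun _ : Fin (s'+1) => Finset.range (m+1)).filter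
          fun A => a0F A = m + 1).card := by
  set q := m / (s'+1) with hq
  have hq1 : 1 ≤ q := (Nat.one_le_div_iff (by omega)).mpr hm
  have hqs : q * (s'+1) ≤ m := Nat.div_mul_le_self m (s'+1)
  have hqm : q ≤ m := Nat.div_le_self m (s'+1)
  have hmaps : ∀ B ∈ Fintype.piFinset (fun _ : Fin s' => Finset.Icc 1 q),
      (Fin.snoc B (m + 1 - ∑ i, B i) : Fin (s'+1) → ℕ)
        ∈ (Fintype.piFinset fun _ : Fin (s'+1) => Finset.range (m+1)).filter
            (fun A => a0F A = m + 1) := by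
    intro B hB
    have hBi : ∀ i, 1 ≤ B i ∧ B i ≤ q := by
      intro i
      have := (Fintype.mem_piFinset.mp hB) i
      rw [Finset.mem_Icc] at this
      exact this
    have hsum_le : (∑ i, B i) ≤ s' * q := by
      calc (∑ i, B i) ≤ ∑ _i : Fin s', q := Finset.sum_le_sum fun i _ => (hBi i).2
        _ = s' * q := by rw [Finset.sum_const, Finset.card_univ, Fintype.card_fin, smul_eq_mul]
    have hsum_ge : s' ≤ ∑ i, B i := by
      calc s' = ∑ _i : Fin s', 1 := by
            rw [Finset.sum_const, Finset.card_univ, Fintype.card_fin, smul_eq_mul, mul_one]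
        _ ≤ ∑ i, B i := Finset.sum_le_sum fun i _ => (hBi i).1
    have hmul : s' * q + q = q * (s'+1) := by ring
    have hsm : (∑ i, B i) ≤ m := by omega
    rw [Finset.mem_filter]
    constructor
    · rw [Fintype.mem_piFinset]
      intro i
      rw [Finset.mem_range]
      refine Fin.lastCases ?_ ?_ i
      · rw [Fin.snoc_last]; omega
      · intro k
        rw [Fin.snoc_castSucc]
        have := (hBi k).2
        omega
    · unfold a0F
      rw [Fin.sum_univ_castSucc]
      simp only [Fin.snoc_castSucc, Fin.snoc_last]
      omega
  have hinj : Set.InjOn (fun B : Fin s' → ℕ => (Fin.snoc B (m + 1 - ∑ i, B i) : Fin (s'+1) → ℕ))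
      ↑(Fintype.piFinset (fun _ : Fin s' => Finset.Icc 1 q)) := by
    intro B1 _ B2 _ heq
    funext i
    have := congrFun heq (Fin.castSucc i)
    simpa [Fin.snoc_castSucc] using this
  have hcard := Finset.card_le_card_of_injOn _ hmaps hinj
  calc q ^ s' = (Fintype.piFinset (fun _ : Fin s' => Finset.Icc 1 q)).card := by
        rw [Fintype.card_piFinset]
        simp only [Nat.card_Icc, Finset.prod_const, Finset.card_univ, Fintype.card_fin]
        norm_num
    _ ≤ _ := hcard

/-- for all sufficiently large `m` (with threshold depending
only on `s`), `ρ̇_m² = E^{(m)}_{Y,T}(Ṡ_m²) ≥ 2^{-2s-4} s^{-s+1} m^{s-1}`. -/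
theorem statement17 (s : ℕ) (hs : 2 ≤ s) :
    ∃ m0 : ℕ, ∀ (m tm : ℕ), m0 ≤ m →
      ∀ C : Fin s → Matrix (Fin m) (Fin m) (ZMod 2),
        IsNet tm m s (fun n : Fin (2 ^ m) => netPoint m s C (n : ℕ)) →
        (tm : ℝ) ≤ Real.logb 2 m / 10 →
        (2 : ℝ) ^ (-(2 * (s : ℤ) + 4)) * (s : ℝ) ^ (-(s : ℤ) + 1) * (m : ℝ) ^ (s - 1) ≤
          Em m s fun t y => (∑ k ∈ Finset.Icc 1 m, DDk m s tm C k t y) ^ 2 := by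
  obtain ⟨s', rfl⟩ : ∃ s', s = s' + 1 := ⟨s - 1, by omega⟩
  have hs' : 1 ≤ s' := by omega
  refine ⟨8 * (s' + 1) * (s' + 1), fun m tm hm C _hnet _htm => ?_⟩
  have hm8 : 8 * (s' + 1) * (s' + 1) ≤ m := hm
  have hm2 : 2 ≤ m := le_trans (by nlinarith) hm8
  have hmss : (s' + 1) ≤ m := le_trans (by nlinarith) hm8
  set q := m / (s' + 1) with hqdef
  rw [st_main_eq m (s'+1) tm C]
  have hsub := st_F0_sub (m := m) (s := s'+1) tm hm2
  -- per-term lower bound on F0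
  have hterm : ∀ A ∈ ((Fintype.piFinset fun _ : Fin (s'+1) => Finset.range (m+1)).filter
      fun A => a0F A = m + 1),
      (2:ℝ) ^ (-(2*((s'+1:ℕ):ℤ)) - 2)
        ≤ (((dualNet m (s'+1) C).filter fun mm => mm ≠ 0 ∧ ∀ i, rhoF (mm i) ≤ A i).card : ℝ)
            * ((2:ℝ) ^ ((m:ℤ) - ((s'+1:ℕ):ℤ) - (a0F A : ℤ)))^2 := by
    intro A hA0
    obtain ⟨hpi, ha0⟩ := Finset.mem_filter.mp hA0
    have hAle : ∀ i, A i ≤ m := by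
      intro i
      have := (Fintype.mem_piFinset.mp hpi) i
      rw [Finset.mem_range] at this
      omega
    have hne := st_exists_dual C A hAle (by omega)
    have hcard1 : (1:ℝ) ≤
        (((dualNet m (s'+1) C).filter fun mm => mm ≠ 0 ∧ ∀ i, rhoF (mm i) ≤ A i).card : ℝ) := by
      exact_mod_cast Finset.card_pos.mpr hne
    have hw : ((2:ℝ) ^ ((m:ℤ) - ((s'+1:ℕ):ℤ) - (a0F A : ℤ)))^2
        = (2:ℝ) ^ (-(2*((s'+1:ℕ):ℤ)) - 2) := by
      rw [pow_two, ← zpow_add₀ (by norm_num : (2:ℝ) ≠ 0), ha0]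
      congr 1
      push_cast
      ring
    rw [hw]
    have hpos : (0:ℝ) < (2:ℝ) ^ (-(2*((s'+1:ℕ):ℤ)) - 2) := by positivity
    exact le_mul_of_one_le_left (le_of_lt hpos) hcard1
  -- chain
  have hchain : (((Fintype.piFinset fun _ : Fin (s'+1) => Finset.range (m+1)).filter
        (fun A => a0F A = m + 1)).card : ℝ) * (2:ℝ) ^ (-(2*((s'+1:ℕ):ℤ)) - 2)
      ≤ ∑ A ∈ (Finset.Icc 1 m).biUnion (fun k => IndexSet m (s'+1) tm k),
          (((dualNet m (s'+1) C).filter fun mm => mm ≠ 0 ∧ ∀ i, rhoF (mm i) ≤ A i).card : ℝ)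
            * ((2:ℝ) ^ ((m:ℤ) - ((s'+1:ℕ):ℤ) - (a0F A : ℤ)))^2 := by
    calc (((Fintype.piFinset fun _ : Fin (s'+1) => Finset.range (m+1)).filter
          (fun A => a0F A = m + 1)).card : ℝ) * (2:ℝ) ^ (-(2*((s'+1:ℕ):ℤ)) - 2)
        = ∑ _A ∈ ((Fintype.piFinset fun _ : Fin (s'+1) => Finset.range (m+1)).filter
            (fun A => a0F A = m + 1)), (2:ℝ) ^ (-(2*((s'+1:ℕ):ℤ)) - 2) := by
          rw [Finset.sum_const, nsmul_eq_mul]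
      _ ≤ ∑ A ∈ ((Fintype.piFinset fun _ : Fin (s'+1) => Finset.range (m+1)).filter
            (fun A => a0F A = m + 1)),
            (((dualNet m (s'+1) C).filter fun mm => mm ≠ 0 ∧ ∀ i, rhoF (mm i) ≤ A i).card : ℝ)
              * ((2:ℝ) ^ ((m:ℤ) - ((s'+1:ℕ):ℤ) - (a0F A : ℤ)))^2 := Finset.sum_le_sum hterm
      _ ≤ _ := Finset.sum_le_sum_of_subset_of_nonneg hsub (fun A _ _ => by positivity)
  have hq_card : ((q:ℝ))^s'
      ≤ (((Fintype.piFinset fun _ : Fin (s'+1) => Finset.range (m+1)).filter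
          (fun A => a0F A = m + 1)).card : ℝ) := by
    have h := st_F0_card m s' hs' hmss
    calc ((q:ℝ))^s' = ((q^s' : ℕ) : ℝ) := by push_cast; rfl
      _ ≤ _ := by exact_mod_cast h
  -- numeric facts
  have hmR : (0:ℝ) < (m:ℝ) := by exact_mod_cast Nat.lt_of_lt_of_le Nat.zero_lt_two hm2
  have hsR : (0:ℝ) < ((s'+1:ℕ):ℝ) := by positivity
  have hmq : (m:ℝ) - ((s'+1:ℕ):ℝ) ≤ ((q:ℝ)) * ((s'+1:ℕ):ℝ) := by
    have h1 : m - (s'+1) ≤ q * (s'+1) := by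
      have h2 := Nat.lt_div_mul_add (a := m) (b := (s'+1)) (by omega)
      rw [← hqdef] at h2
      omega
    calc (m:ℝ) - ((s'+1:ℕ):ℝ) = ((m - (s'+1) : ℕ) : ℝ) := by
          rw [Nat.cast_sub hmss]
      _ ≤ ((q * (s'+1) : ℕ) : ℝ) := by exact_mod_cast h1
      _ = (q:ℝ) * ((s'+1:ℕ):ℝ) := by push_cast; rfl
  have hdiv1 : ((s'+1:ℕ):ℝ)/(m:ℝ) ≤ 1 := by
    rw [div_le_one hmR]
    exact_mod_cast hmss
  have h8 : ((s'+1:ℕ):ℝ) * ((s'+1:ℕ):ℝ) / (m:ℝ) ≤ 1/8 := by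
    rw [div_le_iff₀ hmR]
    have h3 : ((8 * (s' + 1) * (s' + 1) : ℕ) : ℝ) ≤ (m:ℝ) := by exact_mod_cast hm8
    push_cast at h3 ⊢
    linarith
  have hber : (1:ℝ) - ((s'+1:ℕ):ℝ) * ((s'+1:ℕ):ℝ)/(m:ℝ) ≤ (1 - ((s'+1:ℕ):ℝ)/(m:ℝ))^s' := by
    have h2 : (-2:ℝ) ≤ -(((s'+1:ℕ):ℝ)/(m:ℝ)) := by
      have h0 : (0:ℝ) ≤ ((s'+1:ℕ):ℝ)/(m:ℝ) := by positivity
      linarith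
    have h3 := one_add_mul_le_pow h2 s'
    have h4 : (1:ℝ) + -(((s'+1:ℕ):ℝ)/(m:ℝ)) = 1 - ((s'+1:ℕ):ℝ)/(m:ℝ) := by ring
    rw [h4] at h3
    have h5 : (s':ℝ) * (((s'+1:ℕ):ℝ)/(m:ℝ)) ≤ ((s'+1:ℕ):ℝ) * ((s'+1:ℕ):ℝ)/(m:ℝ) := by
      rw [mul_div_assoc]
      refine mul_le_mul_of_nonneg_right ?_ (by positivity)
      push_cast
      linarith
    calc (1:ℝ) - ((s'+1:ℕ):ℝ) * ((s'+1:ℕ):ℝ)/(m:ℝ)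
        ≤ 1 + (s':ℝ) * (-(((s'+1:ℕ):ℝ)/(m:ℝ))) := by
          have : (s':ℝ) * (-(((s'+1:ℕ):ℝ)/(m:ℝ))) = -((s':ℝ) * (((s'+1:ℕ):ℝ)/(m:ℝ))) := by ring
          rw [this]
          linarith
      _ ≤ (1 - ((s'+1:ℕ):ℝ)/(m:ℝ))^s' := h3
  have hquarter : (1/4 : ℝ) ≤ (1 - ((s'+1:ℕ):ℝ)/(m:ℝ))^s' := by linarith
  have hms : ((m:ℝ) - ((s'+1:ℕ):ℝ)) = (m:ℝ) * (1 - ((s'+1:ℕ):ℝ)/(m:ℝ)) := by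
    field_simp
  have hkey : (m:ℝ)^s' / 4 ≤ ((q:ℝ) * ((s'+1:ℕ):ℝ))^s' := by
    calc (m:ℝ)^s' / 4 = (m:ℝ)^s' * (1/4) := by ring
      _ ≤ (m:ℝ)^s' * (1 - ((s'+1:ℕ):ℝ)/(m:ℝ))^s' :=
          mul_le_mul_of_nonneg_left hquarter (by positivity)
      _ = ((m:ℝ) * (1 - ((s'+1:ℕ):ℝ)/(m:ℝ)))^s' := (mul_pow _ _ _).symm
      _ = ((m:ℝ) - ((s'+1:ℕ):ℝ))^s' := by rw [← hms]
      _ ≤ ((q:ℝ) * ((s'+1:ℕ):ℝ))^s' := by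
          refine pow_le_pow_left₀ ?_ hmq s'
          have : ((s'+1:ℕ):ℝ) ≤ (m:ℝ) := by exact_mod_cast hmss
          linarith
  have hspos : (0:ℝ) < ((s'+1:ℕ):ℝ)^s' := by positivity
  have hstep : (1/4:ℝ) * (((s'+1:ℕ):ℝ)^s')⁻¹ * (m:ℝ)^s' ≤ (q:ℝ)^s' := by
    rw [show (1/4:ℝ) * (((s'+1:ℕ):ℝ)^s')⁻¹ * (m:ℝ)^s'
        = ((m:ℝ)^s'/4) / (((s'+1:ℕ):ℝ)^s') from by ring]
    rw [div_le_iff₀ hspos]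
    calc (m:ℝ)^s'/4 ≤ ((q:ℝ) * ((s'+1:ℕ):ℝ))^s' := hkey
      _ = (q:ℝ)^s' * ((s'+1:ℕ):ℝ)^s' := mul_pow _ _ _
  have he1 : (2:ℝ) ^ (-(2 * ((s'+1:ℕ):ℤ) + 4))
      = (2:ℝ) ^ (-(2*((s'+1:ℕ):ℤ)) - 2) * (1/4) := by
    rw [show -(2 * ((s'+1:ℕ):ℤ) + 4) = (-(2*((s'+1:ℕ):ℤ)) - 2) + (-2) from by ring,
      zpow_add₀ (by norm_num : (2:ℝ) ≠ 0)]
    norm_num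
  have he2 : ((s'+1:ℕ):ℝ) ^ (-((s'+1:ℕ):ℤ) + 1) = (((s'+1:ℕ):ℝ)^s')⁻¹ := by
    rw [show -((s'+1:ℕ):ℤ) + 1 = -(s' : ℤ) from by push_cast; ring, zpow_neg, zpow_natCast]
  have hepos : (0:ℝ) < (2:ℝ) ^ (-(2*((s'+1:ℕ):ℤ)) - 2) := by positivity
  calc (2:ℝ) ^ (-(2 * ((s'+1:ℕ):ℤ) + 4)) * ((s'+1:ℕ):ℝ) ^ (-((s'+1:ℕ):ℤ) + 1)
        * (m:ℝ) ^ (s' + 1 - 1)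
      = ((1/4:ℝ) * (((s'+1:ℕ):ℝ)^s')⁻¹ * (m:ℝ)^s') * (2:ℝ) ^ (-(2*((s'+1:ℕ):ℤ)) - 2) := by
        rw [he1, he2, Nat.add_sub_cancel]
        ring
    _ ≤ (q:ℝ)^s' * (2:ℝ) ^ (-(2*((s'+1:ℕ):ℤ)) - 2) :=
        mul_le_mul_of_nonneg_right hstep (le_of_lt hepos)
    _ ≤ (((Fintype.piFinset fun _ : Fin (s'+1) => Finset.range (m+1)).filter
          (fun A => a0F A = m + 1)).card : ℝ) * (2:ℝ) ^ (-(2*((s'+1:ℕ):ℤ)) - 2) :=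
        mul_le_mul_of_nonneg_right hq_card (le_of_lt hepos)
    _ ≤ _ := hchain
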